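/- The function φ(u) = 2(e^u − 1 − u)/u² (with φ(0) = 1) is increasing on ℝ. -/

import Mathlib

noncomputable def phi (u : ℝ) : ℝ := if u = 0 then 1 else 2 * (Real.exp u - 1 - u) / u ^ 2

namespace PhiAux

noncomputable def g (u : ℝ) : ℝ := (u - 2) * Real.exp u + u + 2

lemma hasDerivAt_g (u : ℝ) : HasDerivAt g ((u - 1) * Real.exp u + 1) u := by
  have h1 : HasDerivAt (fun u : ℝ => (u - 2) * Real.exp u)
      (1 * Real.exp u + (u - 2) * Real.exp u) u :=
    ((hasDerivAt_id u).sub_const 2).mul (Real.hasDerivAt_exp u)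
  have h2 := (h1.add (hasDerivAt_id u)).add_const 2
  have e : g = fun x => ((fun u : ℝ => (u - 2) * Real.exp u) + (id : ℝ → ℝ)) x + 2 := by
    funext x; simp [g]
  rw [e]
  refine h2.congr_deriv ?_
  ring

lemma g_deriv_nonneg (u : ℝ) : 0 ≤ (u - 1) * Real.exp u + 1 := by
  have h := Real.add_one_le_exp (-u)
  have hmul : Real.exp (-u) * Real.exp u = 1 := by
    rw [← Real.exp_add]; simp
  nlinarith [Real.exp_pos u, Real.exp_pos (-u)]

lemma g_mono : Monotone g :=
  monotone_of_deriv_nonneg (fun u => (hasDerivAt_g u).differentiableAt)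
    (fun u => by rw [(hasDerivAt_g u).deriv]; exact g_deriv_nonneg u)

lemma g_zero : g 0 = 0 := by simp [g]

lemma mul_g_nonneg (u : ℝ) : 0 ≤ u * g u := by
  rcases le_total u 0 with h | h
  · have : g u ≤ 0 := g_zero ▸ g_mono h
    nlinarith
  · have : 0 ≤ g u := g_zero ▸ g_mono h
    exact mul_nonneg h this

noncomputable def h (u : ℝ) : ℝ := 1 + u + u ^ 2 / 2 - Real.exp u

lemma hasDerivAt_h (u : ℝ) : HasDerivAt h (1 + u - Real.exp u) u := by
  have h1 : HasDerivAt (fun u : ℝ => 1 + u + u ^ 2 / 2 - Real.exp u)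
      (0 + 1 + (2 * u ^ 1 * 1) / 2 - Real.exp u) u := by
    exact (((hasDerivAt_const u (1:ℝ)).add (hasDerivAt_id u)).add
      (((hasDerivAt_id u).pow 2).div_const 2)).sub (Real.hasDerivAt_exp u)
  have e : h = fun u : ℝ => 1 + u + u ^ 2 / 2 - Real.exp u := by
    funext x; simp [h]
  rw [e]
  exact h1.congr_deriv (by ring)

lemma h_anti : Antitone h :=
  antitone_of_deriv_nonpos (fun u => (hasDerivAt_h u).differentiableAt)
    (fun u => by
      rw [(hasDerivAt_h u).deriv]
      have := Real.add_one_le_exp u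
      linarith)

lemma h_zero : h 0 = 0 := by simp [h]

-- exp u ≤ 1 + u + u^2/2 for u ≤ 0
lemma exp_le (u : ℝ) (hu : u ≤ 0) : Real.exp u ≤ 1 + u + u ^ 2 / 2 := by
  have := h_zero ▸ h_anti hu
  simp only [h] at this; linarith

lemma le_exp (u : ℝ) (hu : 0 ≤ u) : 1 + u + u ^ 2 / 2 ≤ Real.exp u := by
  have := h_zero ▸ h_anti hu
  simp only [h] at this; linarith

lemma phi_eq (u : ℝ) (hu : u ≠ 0) : phi u = 2 * (Real.exp u - 1 - u) / u ^ 2 := by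
  simp [phi, hu]

lemma hasDerivAt_phi (u : ℝ) (hu : u ≠ 0) :
    HasDerivAt phi ((2 * (Real.exp u - 1) * u ^ 2 -
      2 * (Real.exp u - 1 - u) * (2 * u)) / (u ^ 2) ^ 2) u := by
  have hnum : HasDerivAt (fun u : ℝ => 2 * (Real.exp u - 1 - u))
      (2 * (Real.exp u - 1)) u := by
    exact (((Real.hasDerivAt_exp u).sub_const 1).sub (hasDerivAt_id u)).const_mul 2
  have hden : HasDerivAt (fun u : ℝ => u ^ 2) (2 * u) u := by
    simpa using hasDerivAt_pow 2 u
  have hdiv := hnum.div hden (pow_ne_zero 2 hu)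
  apply hdiv.congr_of_eventuallyEq
  filter_upwards [isOpen_compl_singleton.eventually_mem hu] with x hx
  exact phi_eq x hx

lemma deriv_phi_nonneg (u : ℝ) (hu : u ≠ 0) : 0 ≤ deriv phi u := by
  rw [(hasDerivAt_phi u hu).deriv]
  apply div_nonneg
  · have := mul_g_nonneg u
    simp only [g] at this
    nlinarith
  · positivity

lemma mono_Ioi : MonotoneOn phi (Set.Ioi 0) := by
  apply monotoneOn_of_deriv_nonneg (convex_Ioi 0)
  · intro x hx
    exact ((hasDerivAt_phi x (ne_of_gt hx)).differentiableAt).continuousAt.continuousWithinAt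
  · intro x hx
    rw [interior_Ioi] at hx
    exact ((hasDerivAt_phi x (ne_of_gt hx)).differentiableAt).differentiableWithinAt
  · intro x hx
    rw [interior_Ioi] at hx
    exact deriv_phi_nonneg x (ne_of_gt hx)

lemma mono_Iio : MonotoneOn phi (Set.Iio 0) := by
  apply monotoneOn_of_deriv_nonneg (convex_Iio 0)
  · intro x hx
    exact ((hasDerivAt_phi x (ne_of_lt hx)).differentiableAt).continuousAt.continuousWithinAt
  · intro x hx
    rw [interior_Iio] at hx
    exact ((hasDerivAt_phi x (ne_of_lt hx)).differentiableAt).differentiableWithinAt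
  · intro x hx
    rw [interior_Iio] at hx
    exact deriv_phi_nonneg x (ne_of_lt hx)

lemma phi_le_one (u : ℝ) (hu : u < 0) : phi u ≤ 1 := by
  rw [phi_eq u (ne_of_lt hu)]
  rw [div_le_one (lt_of_le_of_ne (sq_nonneg u) (Ne.symm (pow_ne_zero 2 hu.ne)))]
  have := exp_le u hu.le
  nlinarith

lemma one_le_phi (u : ℝ) (hu : 0 < u) : 1 ≤ phi u := by
  rw [phi_eq u (ne_of_gt hu)]
  rw [le_div_iff₀ (by positivity)]
  have := le_exp u hu.le
  nlinarith

lemma phi_zero : phi 0 = 1 := by simp [phi]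

end PhiAux

theorem stmt1 : Monotone phi := by
  intro a b hab
  rcases lt_trichotomy a 0 with ha | ha | ha
  · rcases lt_trichotomy b 0 with hb | hb | hb
    · exact PhiAux.mono_Iio ha hb hab
    · rw [hb, PhiAux.phi_zero]; exact PhiAux.phi_le_one a ha
    · exact le_trans (PhiAux.phi_le_one a ha) (PhiAux.one_le_phi b hb)
  · subst ha
    rcases eq_or_lt_of_le hab with hb | hb
    · rw [← hb]
    · rw [PhiAux.phi_zero]; exact PhiAux.one_le_phi b hb
  · exact PhiAux.mono_Ioi ha (lt_of_lt_of_le ha hab) hab
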